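/- Let N ≥ 1 be an integer, C₁, C₂ ≥ 0, and let A, B be real N×N matrices with A ∈ M_N(C₁) and B ∈ M_N(C₂). Then AB ∈ M_N(3C₁C₂); that is, |(AB)_{ij}| ≤ 3C₁C₂(δ_{ij} + 1/N) for all 1 ≤ i, j ≤ N. -/

import Mathlib

/-- `A ∈ M_N(C)` iff `|A i j| ≤ C (δ_{ij} + 1/N)` for all `i j`. -/
def MemMN {N : ℕ} (C : ℝ) (A : Matrix (Fin N) (Fin N) ℝ) : Prop :=
  ∀ i j, |A i j| ≤ C * ((if i = j then (1 : ℝ) else 0) + 1 / N)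

theorem product_of_MN_classes {N : ℕ} (hN : 1 ≤ N) {C₁ C₂ : ℝ}
    (hC₁ : 0 ≤ C₁) (hC₂ : 0 ≤ C₂) {A B : Matrix (Fin N) (Fin N) ℝ}
    (hA : MemMN C₁ A) (hB : MemMN C₂ B) :
    MemMN (3 * C₁ * C₂) (A * B) := by
  intro i j
  have hNpos : (0:ℝ) < N := by exact_mod_cast hN
  have hNne : (N:ℝ) ≠ 0 := ne_of_gt hNpos
  have h1 : |(A * B) i j| ≤ ∑ k, |A i k| * |B k j| := by
    rw [Matrix.mul_apply]
    refine (Finset.abs_sum_le_sum_abs _ _).trans ?_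
    simp [abs_mul]
  have h2 : ∑ k, |A i k| * |B k j| ≤
      ∑ k, (C₁ * ((if i = k then (1:ℝ) else 0) + 1 / N)) *
        (C₂ * ((if k = j then (1:ℝ) else 0) + 1 / N)) := by
    refine Finset.sum_le_sum fun k _ => ?_
    exact mul_le_mul (hA i k) (hB k j) (abs_nonneg _)
      (le_trans (abs_nonneg _) (hA i k))
  have h3 : ∑ k, (C₁ * ((if i = k then (1:ℝ) else 0) + 1 / N)) *
      (C₂ * ((if k = j then (1:ℝ) else 0) + 1 / N))
      = C₁ * C₂ * ((if i = j then (1:ℝ) else 0) + 3 / N) := by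
    have : ∀ k : Fin N, (C₁ * ((if i = k then (1:ℝ) else 0) + 1 / N)) *
        (C₂ * ((if k = j then (1:ℝ) else 0) + 1 / N))
        = C₁ * C₂ * ((if i = k then (1:ℝ) else 0) * (if k = j then (1:ℝ) else 0)
          + (if i = k then (1:ℝ) else 0) * (1/N)
          + (1/N) * (if k = j then (1:ℝ) else 0) + 1/N * (1/N)) := by
      intro k; ring
    rw [Finset.sum_congr rfl fun k _ => this k]
    rw [← Finset.mul_sum]
    congr 1
    rw [Finset.sum_add_distrib, Finset.sum_add_distrib, Finset.sum_add_distrib]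
    have e1 : ∑ k : Fin N, (if i = k then (1:ℝ) else 0) * (if k = j then (1:ℝ) else 0)
        = if i = j then (1:ℝ) else 0 := by
      rw [Finset.sum_eq_single i] <;> simp +contextual [eq_comm]
    have e2 : ∑ k : Fin N, (if i = k then (1:ℝ) else 0) * (1/N) = 1/N := by
      rw [Finset.sum_eq_single i] <;> simp +contextual [eq_comm]
    have e3 : ∑ k : Fin N, (1/(N:ℝ)) * (if k = j then (1:ℝ) else 0) = 1/N := by
      rw [Finset.sum_eq_single j] <;> simp +contextual
    have e4 : ∑ _k : Fin N, (1/(N:ℝ)) * (1/N) = 1/N := by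
      rw [Finset.sum_const, Finset.card_univ, Fintype.card_fin, nsmul_eq_mul]
      field_simp
    rw [e1, e2, e3, e4]; ring
  have h4 : C₁ * C₂ * ((if i = j then (1:ℝ) else 0) + 3 / N)
      ≤ 3 * C₁ * C₂ * ((if i = j then (1:ℝ) else 0) + 1 / N) := by
    have hinv : (0:ℝ) ≤ ((N:ℝ))⁻¹ := by positivity
    rcases em (i = j) with h | h <;> simp [h, div_eq_mul_inv] <;>
      nlinarith [mul_nonneg hC₁ hC₂, hinv]
  calc |(A * B) i j| ≤ _ := h1
    _ ≤ _ := h2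
    _ = _ := h3
    _ ≤ _ := h4
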